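/- Let a be a positive integer. The set {(ζ + ξ + (ζξ)⁻¹, ζ⁻¹ + ξ⁻¹ + ζξ) : ζ, ξ ∈ ℂ, ζ^a = ξ^a = 1} ⊆ ℂ² has exactly (a² + 3a + 2·gcd(a,3))/6 elements. -/

import Mathlib

open Equiv MulAction Polynomial Finset

namespace Stmt17

def Trip (a : ℕ) : Type := {v : Fin 3 → ℂ // (∀ i, v i ^ a = 1) ∧ (∏ i, v i) = 1}

variable {a : ℕ}

instance : SMul (Equiv.Perm (Fin 3)) (Trip a) :=
  ⟨fun σ v => ⟨v.1 ∘ σ.symm, fun i => v.2.1 _, by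
    simpa using Equiv.prod_comp σ.symm v.1 ▸ v.2.2⟩⟩

theorem smul_coe (σ : Equiv.Perm (Fin 3)) (v : Trip a) : (σ • v).1 = v.1 ∘ σ.symm := rfl

instance : MulAction (Equiv.Perm (Fin 3)) (Trip a) where
  one_smul v := Subtype.ext (funext fun i => rfl)
  mul_smul σ τ v := Subtype.ext (funext fun i => rfl)

noncomputable def F (v : Trip a) : ℂ × ℂ := (∑ i, v.1 i, ∑ i, (v.1 i)⁻¹)

def M (v : Trip a) : Multiset ℂ := Finset.univ.val.map v.1

theorem ne_zero (ha : 0 < a) (v : Trip a) (i : Fin 3) : v.1 i ≠ 0 := by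
  intro h
  have := v.2.1 i
  rw [h, zero_pow ha.ne'] at this
  exact zero_ne_one this

theorem M_explicit (v : Trip a) : M v = v.1 0 ::ₘ v.1 1 ::ₘ {v.1 2} := by
  simp [M, Fin.univ_val_map, List.ofFn_succ]
  rfl

theorem prod3 (v : Trip a) : v.1 0 * v.1 1 * v.1 2 = 1 := by
  have := v.2.2; rwa [Fin.prod_univ_three] at this

theorem poly_eq (ha : 0 < a) (v : Trip a) :
    ((M v).map (fun z => Polynomial.X - Polynomial.C z)).prod
      = X ^ 3 - C (F v).1 * X ^ 2 + C (F v).2 * X - C 1 := by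
  rw [M_explicit]
  have h3 := prod3 v
  have i0 : (v.1 0)⁻¹ = v.1 1 * v.1 2 := inv_eq_of_mul_eq_one_right (by rw [← mul_assoc]; exact h3)
  have i1 : (v.1 1)⁻¹ = v.1 0 * v.1 2 := inv_eq_of_mul_eq_one_right (by ring_nf; linear_combination h3)
  have i2 : (v.1 2)⁻¹ = v.1 0 * v.1 1 := inv_eq_of_mul_eq_one_right (by ring_nf; linear_combination h3)
  have hC : (C (v.1 0) : Polynomial ℂ) * C (v.1 1) * C (v.1 2) = 1 := by
    rw [← map_mul, ← map_mul, h3, map_one]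
  simp only [Multiset.map_cons, Multiset.map_singleton, Multiset.prod_cons,
    Multiset.prod_singleton, F, Fin.sum_univ_three, i0, i1, i2]
  simp only [map_add, map_mul, map_one]
  rw [← hC]
  ring

theorem M_eq_of_F_eq (ha : 0 < a) {v w : Trip a} (h : F v = F w) : M v = M w := by
  have := congrArg Polynomial.roots
    ((poly_eq ha v).trans (h ▸ (poly_eq ha w).symm))
  rwa [roots_multiset_prod_X_sub_C, roots_multiset_prod_X_sub_C] at this

theorem F_eq_of_M_eq {v w : Trip a} (h : M v = M w) : F v = F w := by
  have h1 : ∑ i, v.1 i = ∑ i, w.1 i := by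
    have := congrArg Multiset.sum h
    simpa [M, Finset.sum] using this
  have h2 : ∑ i, (v.1 i)⁻¹ = ∑ i, (w.1 i)⁻¹ := by
    have := congrArg (fun m => (Multiset.map Inv.inv m).sum) h
    simpa [M, Multiset.map_map, Finset.sum, Function.comp] using this
  simp [F, h1, h2]


theorem exists_comp_perm {n : ℕ} {α : Type*} {v w : Fin n → α}
    (h : (List.ofFn v).Perm (List.ofFn w)) : ∃ σ : Equiv.Perm (Fin n), v ∘ σ = w := by
  induction n with
  | zero => exact ⟨1, funext fun i => i.elim0⟩
  | succ n ih =>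
    have hw0 : w 0 ∈ List.ofFn v := h.symm.subset ((List.mem_ofFn (f := w) (a := w 0)).2 ⟨0, rfl⟩)
    obtain ⟨j, hj⟩ := (List.mem_ofFn (f := v) (a := w 0)).1 hw0
    set τ := Equiv.swap (0 : Fin (n+1)) j with hτ
    have h' : (List.ofFn (v ∘ τ)).Perm (List.ofFn w) := (τ.ofFn_comp_perm v).trans h
    rw [List.ofFn_succ, List.ofFn_succ] at h'
    have h0 : (v ∘ τ) 0 = w 0 := by simp [hτ, Equiv.swap_apply_left, hj]
    rw [h0] at h'
    obtain ⟨σ', hσ'⟩ := ih h'.cons_inv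
    refine ⟨(Equiv.Perm.decomposeFin.symm (0, σ')).trans τ, funext fun i => ?_⟩
    induction i using Fin.cases with
    | zero => simpa using h0
    | succ i =>
      have := congrFun hσ' i
      simpa [Equiv.Perm.decomposeFin_symm_apply_succ, Equiv.swap_self] using this

theorem M_smul (σ : Equiv.Perm (Fin 3)) (v : Trip a) : M (σ • v) = M v := by
  have : Finset.univ.val.map ⇑σ.symm = Finset.univ.val :=
    congrArg Finset.val (Finset.map_univ_equiv σ.symm)
  simp only [M, smul_coe]
  conv_rhs => rw [← this, Multiset.map_map]

theorem orbit_of_M_eq {v w : Trip a} (h : M v = M w) : w ∈ MulAction.orbit (Equiv.Perm (Fin 3)) v := by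
  have hl : (List.ofFn v.1).Perm (List.ofFn w.1) := by
    rw [← Multiset.coe_eq_coe, ← Fin.univ_val_map, ← Fin.univ_val_map]
    exact h
  obtain ⟨σ, hσ⟩ := exists_comp_perm hl
  exact ⟨σ⁻¹, Subtype.ext (by simpa [smul_coe, Equiv.Perm.inv_def] using hσ)⟩

theorem F_smul (σ : Equiv.Perm (Fin 3)) (v : Trip a) : F (σ • v) = F v :=
  F_eq_of_M_eq (M_smul σ v)

noncomputable def Fbar (a : ℕ) :
    Quotient (MulAction.orbitRel (Equiv.Perm (Fin 3)) (Trip a)) → ℂ × ℂ :=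
  Quotient.lift F (by
    rintro v w ⟨σ, rfl⟩
    exact F_smul σ w)

theorem Fbar_injective (ha : 0 < a) : Function.Injective (Fbar a) := by
  rintro ⟨v⟩ ⟨w⟩ h
  exact Quotient.sound (orbit_of_M_eq (M_eq_of_F_eq ha h.symm))

theorem range_Fbar (ha : 0 < a) :
    Set.range (Fbar a) = {xy : ℂ × ℂ | ∃ ζ ξ : ℂ, ζ ^ a = 1 ∧ ξ ^ a = 1 ∧
        xy = (ζ + ξ + (ζ * ξ)⁻¹, ζ⁻¹ + ξ⁻¹ + ζ * ξ)} := by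
  ext xy
  constructor
  · rintro ⟨⟨v⟩, rfl⟩
    refine ⟨v.1 0, v.1 1, v.2.1 0, v.2.1 1, ?_⟩
    have h2 : v.1 2 = (v.1 0 * v.1 1)⁻¹ := (inv_eq_of_mul_eq_one_right (prod3 v)).symm
    show F v = _
    simp only [F, Fin.sum_univ_three, h2, inv_inv]
  · rintro ⟨ζ, ξ, hζ, hξ, rfl⟩
    have hζ0 : ζ ≠ 0 := fun h => by simp [h, zero_pow ha.ne'] at hζ
    have hξ0 : ξ ≠ 0 := fun h => by simp [h, zero_pow ha.ne'] at hξ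
    refine ⟨⟦⟨![ζ, ξ, (ζ * ξ)⁻¹], fun i => ?_, ?_⟩⟧, ?_⟩
    · fin_cases i <;> simp [hζ, hξ, ← mul_pow, mul_pow, inv_pow]
    · rw [Fin.prod_univ_three]
      simp only [Matrix.cons_val_zero, Matrix.cons_val_one, Matrix.head_cons, Matrix.cons_val_two,
        Matrix.tail_cons]
      field_simp
    · show F _ = _
      simp [F, Fin.sum_univ_three]


theorem pow_ne_zero' {n : ℕ} (hn : 0 < n) {z : ℂ} (h : z ^ n = 1) : z ≠ 0 := by
  intro h0
  rw [h0, zero_pow hn.ne'] at h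
  exact zero_ne_one h

theorem card_roots {n : ℕ} (hn : 0 < n) : Nat.card {z : ℂ // z ^ n = 1} = n := by
  have hset : {z : ℂ | z ^ n = 1} = ↑(Polynomial.nthRootsFinset n (1 : ℂ)) := by
    ext z; simp [Polynomial.mem_nthRootsFinset hn]
  calc Nat.card {z : ℂ // z ^ n = 1} = ({z : ℂ | z ^ n = 1}).ncard :=
        Nat.card_coe_set_eq _
    _ = n := by
        rw [hset, Set.ncard_coe_finset,
          (Complex.isPrimitiveRoot_exp n hn.ne').card_nthRootsFinset]

theorem card_cubeRoots (ha : 0 < a) :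
    Nat.card {z : ℂ // z ^ a = 1 ∧ z ^ 3 = 1} = Nat.gcd a 3 := by
  have hg : 0 < Nat.gcd a 3 := Nat.gcd_pos_of_pos_left 3 ha
  have key : ∀ z : ℂ, (z ^ a = 1 ∧ z ^ 3 = 1) ↔ z ^ Nat.gcd a 3 = 1 := by
    intro z
    constructor
    · rintro ⟨h1, h2⟩
      have hz : z ≠ 0 := pow_ne_zero' ha h1
      have : z ^ ((Nat.gcd a 3 : ℤ)) = 1 := by
        rw [Nat.gcd_eq_gcd_ab, zpow_add₀ hz, zpow_mul, zpow_mul,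
          zpow_natCast, zpow_natCast, h1, h2, one_zpow, one_zpow, one_mul]
      rwa [zpow_natCast] at this
    · intro h
      obtain ⟨k, hk⟩ := Nat.gcd_dvd_left a 3
      obtain ⟨l, hl⟩ := Nat.gcd_dvd_right a 3
      constructor
      · rw [hk, pow_mul, h, one_pow]
      · rw [hl, pow_mul, h, one_pow]
  rw [Nat.card_congr (Equiv.subtypeEquivRight key)]
  exact card_roots hg

/-- parametrize `Trip a` by the first two coordinates -/
noncomputable def equivPair (ha : 0 < a) :
    Trip a ≃ {z : ℂ // z ^ a = 1} × {z : ℂ // z ^ a = 1} where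
  toFun v := (⟨v.1 0, v.2.1 0⟩, ⟨v.1 1, v.2.1 1⟩)
  invFun p := ⟨![p.1.1, p.2.1, (p.1.1 * p.2.1)⁻¹],
    fun i => by fin_cases i <;> simp [p.1.2, p.2.2, mul_pow, inv_pow],
    by
      rw [Fin.prod_univ_three]
      simp only [Matrix.cons_val_zero, Matrix.cons_val_one, Matrix.head_cons]
      exact mul_inv_cancel₀
        (mul_ne_zero (pow_ne_zero' ha p.1.2) (pow_ne_zero' ha p.2.2))⟩
  left_inv v := by
    apply Subtype.ext
    funext i
    have h2 : v.1 2 = (v.1 0 * v.1 1)⁻¹ := (inv_eq_of_mul_eq_one_right (prod3 v)).symm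
    fin_cases i <;> simp [h2]
  right_inv p := by
    apply Prod.ext <;> exact Subtype.ext rfl

theorem card_Trip (ha : 0 < a) : Nat.card (Trip a) = a ^ 2 := by
  rw [Nat.card_congr (equivPair ha), Nat.card_prod, card_roots ha, sq]

theorem fix_swap01_mem (v : Trip a) :
    Equiv.swap (0 : Fin 3) 1 • v = v ↔ v.1 1 = v.1 0 := by
  constructor
  · intro h
    have := congrFun (congrArg Subtype.val h) 0
    simpa [smul_coe] using this
  · intro h
    apply Subtype.ext
    funext i
    show v.1 ((Equiv.swap (0 : Fin 3) 1).symm i) = v.1 i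
    have e : ∀ j : Fin 3, (Equiv.swap (0 : Fin 3) 1) j
        = if j = 0 then 1 else if j = 1 then 0 else 2 := by decide
    fin_cases i <;> simp [e, h]

noncomputable def equivFixSwap (ha : 0 < a) :
    ↥(MulAction.fixedBy (Trip a) (Equiv.swap (0 : Fin 3) 1)) ≃ {z : ℂ // z ^ a = 1} where
  toFun p := ⟨p.1.1 0, p.1.2.1 0⟩
  invFun z := ⟨⟨![z.1, z.1, (z.1 * z.1)⁻¹],
    fun i => by fin_cases i <;> simp [z.2, mul_pow, inv_pow],
    by
      rw [Fin.prod_univ_three]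
      simp only [Matrix.cons_val_zero, Matrix.cons_val_one, Matrix.head_cons]
      exact mul_inv_cancel₀ (mul_ne_zero (pow_ne_zero' ha z.2) (pow_ne_zero' ha z.2))⟩,
    by
      refine (fix_swap01_mem _).2 ?_
      rfl⟩
  left_inv p := by
    apply Subtype.ext
    apply Subtype.ext
    funext i
    have h10 : p.1.1 1 = p.1.1 0 := (fix_swap01_mem p.1).1 p.2
    have h2 : p.1.1 2 = (p.1.1 0 * p.1.1 0)⁻¹ := by
      have h3 := prod3 p.1
      rw [h10] at h3
      exact (inv_eq_of_mul_eq_one_right h3).symm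
    fin_cases i <;> simp [h10, h2]
  right_inv z := Subtype.ext rfl

theorem fix_rot_mem (v : Trip a) :
    finRotate 3 • v = v ↔ (v.1 1 = v.1 0 ∧ v.1 2 = v.1 0) := by
  constructor
  · intro h
    have h0 := congrFun (congrArg Subtype.val h) 1
    have h1 := congrFun (congrArg Subtype.val h) 2
    rw [smul_coe] at h0 h1
    have e0 : (finRotate 3).symm 1 = 0 := by decide
    have e1 : (finRotate 3).symm 2 = 1 := by decide
    rw [Function.comp_apply, e0] at h0
    rw [Function.comp_apply, e1] at h1
    exact ⟨h0.symm, h1.symm.trans h0.symm⟩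
  · rintro ⟨h1, h2⟩
    apply Subtype.ext
    funext i
    show v.1 ((finRotate 3).symm i) = v.1 i
    have hall : ∀ j : Fin 3, v.1 j = v.1 0 := by
      intro j; fin_cases j <;> simp [h1, h2]
    rw [hall ((finRotate 3).symm i), hall i]

noncomputable def equivFixRot (ha : 0 < a) :
    ↥(MulAction.fixedBy (Trip a) (finRotate 3)) ≃ {z : ℂ // z ^ a = 1 ∧ z ^ 3 = 1} where
  toFun p := ⟨p.1.1 0, p.1.2.1 0, by
    obtain ⟨h1, h2⟩ := (fix_rot_mem p.1).1 p.2
    have h3 := prod3 p.1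
    rw [h1, h2] at h3
    linear_combination h3⟩
  invFun z := ⟨⟨![z.1, z.1, z.1],
    fun i => by fin_cases i <;> simp [z.2.1],
    by
      rw [Fin.prod_univ_three]
      simp only [Matrix.cons_val_zero, Matrix.cons_val_one, Matrix.head_cons,
        Matrix.cons_val_two, Matrix.tail_cons]
      linear_combination z.2.2⟩,
    by
      refine (fix_rot_mem _).2 ?_
      exact ⟨rfl, rfl⟩⟩
  left_inv p := by
    apply Subtype.ext
    apply Subtype.ext
    funext i
    obtain ⟨h1, h2⟩ := (fix_rot_mem p.1).1 p.2
    fin_cases i <;> simp [h1, h2]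
  right_inv z := Subtype.ext rfl

theorem card_fix_conj (σ h : Equiv.Perm (Fin 3)) :
    Nat.card ↥(MulAction.fixedBy (Trip a) (h * σ * h⁻¹))
      = Nat.card ↥(MulAction.fixedBy (Trip a) σ) := by
  rw [← MulAction.smul_fixedBy (Trip a) σ h, Nat.card_coe_set_eq,
    Nat.card_coe_set_eq, ← Set.image_smul,
    Set.ncard_image_of_injective _ (MulAction.injective h)]


theorem main_count (ha : 0 < a) :
    6 * Nat.card (Quotient (MulAction.orbitRel (Equiv.Perm (Fin 3)) (Trip a)))
      = a ^ 2 + 3 * a + 2 * Nat.gcd a 3 := by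
  have hfinR : Finite {z : ℂ // z ^ a = 1} :=
    Nat.finite_of_card_ne_zero (by rw [card_roots ha]; exact ha.ne')
  have hfinT : Finite (Trip a) := by
    apply Finite.of_injective
      (fun v : Trip a => (fun i => ⟨v.1 i, v.2.1 i⟩ : Fin 3 → {z : ℂ // z ^ a = 1}))
    intro v w h
    apply Subtype.ext
    funext i
    exact congrArg Subtype.val (congrFun h i)
  haveI : Fintype (Trip a) := Fintype.ofFinite _
  haveI : ∀ σ : Equiv.Perm (Fin 3), Fintype ↥(MulAction.fixedBy (Trip a) σ) :=
    fun σ => Fintype.ofFinite _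
  haveI : Fintype (Quotient (MulAction.orbitRel (Equiv.Perm (Fin 3)) (Trip a))) :=
    Fintype.ofFinite _
  have hBurn := MulAction.sum_card_fixedBy_eq_card_orbits_mul_card_group
    (Equiv.Perm (Fin 3)) (Trip a)
  have hcard6 : Fintype.card (Equiv.Perm (Fin 3)) = 6 := by
    rw [Fintype.card_perm, Fintype.card_fin]; rfl
  have huniv : (Finset.univ : Finset (Equiv.Perm (Fin 3)))
      = {1, Equiv.swap 0 1, Equiv.swap 0 2, Equiv.swap 1 2,
          finRotate 3, finRotate 3 * finRotate 3} := by
    refine (Finset.eq_univ_of_card _ ?_).symm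
    rw [hcard6]
    decide
  -- individual cardinalities, as Nat.card
  have c1 : Nat.card ↥(MulAction.fixedBy (Trip a) (1 : Equiv.Perm (Fin 3))) = a ^ 2 := by
    rw [MulAction.fixedBy_one_eq_univ, Nat.card_coe_set_eq, Set.ncard_univ]
    exact card_Trip ha
  have c01 : Nat.card ↥(MulAction.fixedBy (Trip a) (Equiv.swap (0 : Fin 3) 1)) = a := by
    rw [Nat.card_congr (equivFixSwap ha)]
    exact card_roots ha
  have c02 : Nat.card ↥(MulAction.fixedBy (Trip a) (Equiv.swap (0 : Fin 3) 2)) = a := by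
    have : Equiv.swap (0 : Fin 3) 2
        = Equiv.swap 1 2 * Equiv.swap 0 1 * (Equiv.swap 1 2)⁻¹ := by decide
    rw [this, card_fix_conj]
    exact c01
  have c12 : Nat.card ↥(MulAction.fixedBy (Trip a) (Equiv.swap (1 : Fin 3) 2)) = a := by
    have : Equiv.swap (1 : Fin 3) 2
        = Equiv.swap 0 2 * Equiv.swap 0 1 * (Equiv.swap 0 2)⁻¹ := by decide
    rw [this, card_fix_conj]
    exact c01
  have cr : Nat.card ↥(MulAction.fixedBy (Trip a) (finRotate 3)) = Nat.gcd a 3 := by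
    rw [Nat.card_congr (equivFixRot ha)]
    exact card_cubeRoots ha
  have cr2 : Nat.card ↥(MulAction.fixedBy (Trip a) (finRotate 3 * finRotate 3))
      = Nat.gcd a 3 := by
    have : finRotate 3 * finRotate 3
        = Equiv.swap 1 2 * finRotate 3 * (Equiv.swap 1 2)⁻¹ := by decide
    rw [this, card_fix_conj]
    exact cr
  rw [huniv] at hBurn
  rw [Finset.sum_insert (by decide), Finset.sum_insert (by decide),
    Finset.sum_insert (by decide), Finset.sum_insert (by decide),
    Finset.sum_pair (by decide)] at hBurn
  simp only [← Nat.card_eq_fintype_card] at hBurn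
  have hcard6' : Nat.card (Equiv.Perm (Fin 3)) = 6 := by
    rw [Nat.card_eq_fintype_card, hcard6]
  rw [c1, c01, c02, c12, cr, cr2, hcard6'] at hBurn
  omega

end Stmt17

theorem stmt_17 (a : ℕ) (ha : 0 < a) :
    (({xy : ℂ × ℂ | ∃ ζ ξ : ℂ, ζ ^ a = 1 ∧ ξ ^ a = 1 ∧
        xy = (ζ + ξ + (ζ * ξ)⁻¹, ζ⁻¹ + ξ⁻¹ + ζ * ξ)}).ncard : ℚ)
      = ((a : ℚ) ^ 2 + 3 * a + 2 * Nat.gcd a 3) / 6 := by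
  have hset : {xy : ℂ × ℂ | ∃ ζ ξ : ℂ, ζ ^ a = 1 ∧ ξ ^ a = 1 ∧
      xy = (ζ + ξ + (ζ * ξ)⁻¹, ζ⁻¹ + ξ⁻¹ + ζ * ξ)} = Set.range (Stmt17.Fbar a) :=
    (Stmt17.range_Fbar ha).symm
  have hN : ({xy : ℂ × ℂ | ∃ ζ ξ : ℂ, ζ ^ a = 1 ∧ ξ ^ a = 1 ∧
      xy = (ζ + ξ + (ζ * ξ)⁻¹, ζ⁻¹ + ξ⁻¹ + ζ * ξ)}).ncard
      = Nat.card (Quotient (MulAction.orbitRel (Equiv.Perm (Fin 3)) (Stmt17.Trip a))) := by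
    rw [hset, ← Nat.card_coe_set_eq,
      Nat.card_range_of_injective (Stmt17.Fbar_injective ha)]
  have hmain := Stmt17.main_count ha
  rw [hN]
  rw [eq_div_iff (by norm_num : (6 : ℚ) ≠ 0)]
  have := congrArg (fun n : ℕ => (n : ℚ)) hmain
  push_cast at this ⊢
  linarith
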